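/- Let X ∈ ℝ^{M×N} with all entries nonnegative, S ∈ ℝ^{M×K} with all entries positive, and H ∈ ℝ^{K×N} with all entries positive. Define the multiplicative update H'_{lj} = H_{lj} (Sᵀ X)_{lj} / (Sᵀ S H)_{lj}. Then Σ_{i,j} (X_{ij} − (SH')_{ij})² ≤ Σ_{i,j} (X_{ij} − (SH)_{ij})², i.e., the NMF objective does not increase under the multiplicative update of H. -/

import Mathlib

open Finset Matrix

private lemma amgm_aux (q p r u v : ℝ) (hq : 0 ≤ q) (hp : 0 < p) (hr : 0 < r) :
    q * (u * v) * 2 ≤ q * (r * u ^ 2 / p) + q * (p * v ^ 2 / r) := by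
  have h1 : u * v * 2 ≤ r * u ^ 2 / p + p * v ^ 2 / r := by
    rw [div_add_div _ _ hp.ne' hr.ne', le_div_iff₀ (mul_pos hp hr)]
    nlinarith [sq_nonneg (u * r - v * p)]
  nlinarith [mul_le_mul_of_nonneg_left h1 hq]

private lemma nmf_col {M K : ℕ} (hM : 0 < M)
    (x : Fin M → ℝ)
    (S : Matrix (Fin M) (Fin K) ℝ) (hS : ∀ i l, 0 < S i l)
    (h : Fin K → ℝ) (hh : ∀ l, 0 < h l)
    (h' : Fin K → ℝ)
    (hh' : ∀ l, h' l = h l * (∑ i, S i l * x i) / (∑ m, (∑ i, S i l * S i m) * h m)) :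
    ∑ i, (x i - ∑ l, S i l * h' l) ^ 2 ≤ ∑ i, (x i - ∑ l, S i l * h l) ^ 2 := by
  classical
  set a : Fin K → ℝ := fun l => ∑ i, S i l * x i with ha
  set b : Fin K → ℝ := fun l => ∑ m, (∑ i, S i l * S i m) * h m with hb
  set δ : Fin K → ℝ := fun l => h' l - h l with hδ
  have hQpos : ∀ l m : Fin K, 0 < ∑ i, S i l * S i m := fun l m =>
    Finset.sum_pos (fun i _ => mul_pos (hS i l) (hS i m))
      (Finset.univ_nonempty_iff.mpr (Fin.pos_iff_nonempty.mp hM))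
  have hbpos : ∀ l, 0 < b l := fun l =>
    Finset.sum_pos (fun m _ => mul_pos (hQpos l m) (hh m)) ⟨l, Finset.mem_univ l⟩
  have hbd : ∀ l, b l * δ l = h l * (a l - b l) := by
    intro l
    have hbne : b l ≠ 0 := (hbpos l).ne'
    have : h' l = h l * a l / b l := hh' l
    simp only [hδ]
    have e : b l * h' l = h l * a l := by rw [this]; field_simp
    linarith [e]
  -- key identity
  have key : ∑ i, (x i - ∑ l, S i l * h' l) ^ 2
      = (∑ i, (x i - ∑ l, S i l * h l) ^ 2)
        + (∑ l, 2 * (b l - a l) * δ l)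
        + ∑ l, ∑ m, (∑ i, S i l * S i m) * (δ l * δ m) := by
    have hrw : ∀ l, h' l = h l + δ l := fun l => by simp [hδ]
    simp only [hrw]
    have e1 : ∀ i : Fin M, ∑ l, S i l * (h l + δ l)
        = (∑ l, S i l * h l) + ∑ l, S i l * δ l := by
      intro i; rw [← Finset.sum_add_distrib]; congr 1; ext l; ring
    simp only [e1]
    have expand : ∀ i : Fin M,
        (x i - ((∑ l, S i l * h l) + ∑ l, S i l * δ l)) ^ 2
        = (x i - ∑ l, S i l * h l) ^ 2
          + (∑ l, S i l * δ l) ^ 2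
          - 2 * (x i * (∑ l, S i l * δ l))
          + 2 * ((∑ l, S i l * h l) * (∑ l, S i l * δ l)) := by
      intro i; ring
    simp only [expand]
    rw [Finset.sum_add_distrib, Finset.sum_sub_distrib, Finset.sum_add_distrib,
      ← Finset.mul_sum, ← Finset.mul_sum]
    have I1 : ∑ i, x i * ∑ l, S i l * δ l = ∑ l, a l * δ l := by
      simp only [ha, Finset.mul_sum, Finset.sum_mul]
      rw [Finset.sum_comm]
      congr 1; ext i; congr 1; ext l; ring
    have I2 : ∑ i, (∑ l, S i l * h l) * (∑ l, S i l * δ l) = ∑ l, b l * δ l := by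
      simp only [hb, Finset.sum_mul, Finset.mul_sum]
      rw [Finset.sum_comm]
      congr 1; ext l
      rw [Finset.sum_comm]
      congr 1; ext m
      congr 1; ext i
      ring
    have I3 : ∑ i, (∑ l, S i l * δ l) ^ 2
        = ∑ l, ∑ m, (∑ i, S i l * S i m) * (δ l * δ m) := by
      have : ∀ i : Fin M, (∑ l, S i l * δ l) ^ 2
          = ∑ l, ∑ m, (S i l * S i m) * (δ l * δ m) := by
        intro i
        rw [sq, Finset.sum_mul_sum]
        congr 1; ext l; congr 1; ext m; ring
      simp only [this]
      rw [Finset.sum_comm]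
      congr 1; ext l
      rw [Finset.sum_comm]
      congr 1; ext m
      rw [Finset.sum_mul]
    rw [I1, I2, I3]
    have : ∑ l, 2 * (b l - a l) * δ l
        = 2 * (∑ l, b l * δ l) - 2 * (∑ l, a l * δ l) := by
      rw [Finset.mul_sum, Finset.mul_sum, ← Finset.sum_sub_distrib]
      congr 1; ext l; ring
    rw [this]; ring
  -- bound quadratic term
  have quad : ∑ l, ∑ m, (∑ i, S i l * S i m) * (δ l * δ m)
      ≤ ∑ l, b l * δ l ^ 2 / h l := by
    have sym : ∑ l, ∑ m, (∑ i, S i l * S i m) * (h m * δ l ^ 2 / h l)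
        = ∑ l, ∑ m, (∑ i, S i l * S i m) * (h l * δ m ^ 2 / h m) := by
      rw [Finset.sum_comm]
      congr 1; ext l; congr 1; ext m
      have : (∑ i, S i m * S i l) = ∑ i, S i l * S i m := by
        congr 1; ext i; ring
      rw [this]
    have half : ∀ l m : Fin K, (∑ i, S i l * S i m) * (δ l * δ m) * 2
        ≤ (∑ i, S i l * S i m) * (h m * δ l ^ 2 / h l)
          + (∑ i, S i l * S i m) * (h l * δ m ^ 2 / h m) := by
      intro l m
      exact amgm_aux _ _ _ _ _ (hQpos l m).le (hh l) (hh m)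
    have step : (∑ l, ∑ m, (∑ i, S i l * S i m) * (δ l * δ m)) * 2
        ≤ (∑ l, ∑ m, (∑ i, S i l * S i m) * (h m * δ l ^ 2 / h l)) * 2 := by
      calc (∑ l, ∑ m, (∑ i, S i l * S i m) * (δ l * δ m)) * 2
          = ∑ l, ∑ m, (∑ i, S i l * S i m) * (δ l * δ m) * 2 := by
            rw [Finset.sum_mul]; congr 1; ext l; rw [Finset.sum_mul]
        _ ≤ ∑ l, ∑ m, ((∑ i, S i l * S i m) * (h m * δ l ^ 2 / h l)
              + (∑ i, S i l * S i m) * (h l * δ m ^ 2 / h m)) := by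
            apply Finset.sum_le_sum; intro l _
            apply Finset.sum_le_sum; intro m _
            exact half l m
        _ = (∑ l, ∑ m, (∑ i, S i l * S i m) * (h m * δ l ^ 2 / h l))
              + ∑ l, ∑ m, (∑ i, S i l * S i m) * (h l * δ m ^ 2 / h m) := by
            rw [← Finset.sum_add_distrib]; congr 1; ext l
            rw [← Finset.sum_add_distrib]
        _ = (∑ l, ∑ m, (∑ i, S i l * S i m) * (h m * δ l ^ 2 / h l)) * 2 := by
            rw [← sym]; ring
    have hfin : ∑ l, ∑ m, (∑ i, S i l * S i m) * (h m * δ l ^ 2 / h l)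
        = ∑ l, b l * δ l ^ 2 / h l := by
      refine Finset.sum_congr rfl fun l _ => ?_
      simp only [hb]
      rw [mul_div_assoc, Finset.sum_mul]
      refine Finset.sum_congr rfl fun m _ => ?_
      ring
    linarith [step, hfin ▸ step]
  -- linear term
  have lin : ∀ l, 2 * (b l - a l) * δ l = -2 * (b l * δ l ^ 2 / h l) := by
    intro l
    have hne : h l ≠ 0 := (hh l).ne'
    field_simp
    have e := hbd l
    simp only [hδ] at e
    linear_combination (h' l - h l) * e
  have lin' : ∑ l, 2 * (b l - a l) * δ l = -2 * ∑ l, b l * δ l ^ 2 / h l := by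
    rw [Finset.mul_sum]
    exact Finset.sum_congr rfl fun l _ => lin l
  have nonneg : 0 ≤ ∑ l, b l * δ l ^ 2 / h l :=
    Finset.sum_nonneg fun l _ => div_nonneg (mul_nonneg (hbpos l).le (sq_nonneg _)) (hh l).le
  rw [key, lin']
  linarith

/-- The NMF objective does not increase under the Lee–Seung multiplicative update of `H`:
`H' l j = H l j * (Sᵀ * X) l j / (Sᵀ * S * H) l j`. -/
theorem nmf_H_update_monotone {M N K : ℕ}
    (X : Matrix (Fin M) (Fin N) ℝ) (hX : ∀ i j, 0 ≤ X i j)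
    (S : Matrix (Fin M) (Fin K) ℝ) (hS : ∀ i l, 0 < S i l)
    (H : Matrix (Fin K) (Fin N) ℝ) (hH : ∀ l j, 0 < H l j)
    (H' : Matrix (Fin K) (Fin N) ℝ)
    (hH' : ∀ l j, H' l j = H l j * (Sᵀ * X) l j / (Sᵀ * S * H) l j) :
    ∑ i, ∑ j, (X i j - (S * H') i j) ^ 2 ≤ ∑ i, ∑ j, (X i j - (S * H) i j) ^ 2 := by
  rcases Nat.eq_zero_or_pos M with hM | hM
  · subst hM
    simp
  rw [Finset.sum_comm (γ := Fin M) (α := Fin N)]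
  rw [Finset.sum_comm (γ := Fin M) (α := Fin N)]
  apply Finset.sum_le_sum
  intro j _
  have := nmf_col hM (fun i => X i j) S hS (fun l => H l j) (fun l => hH l j)
    (fun l => H' l j) (fun l => by
      have := hH' l j
      simpa [Matrix.mul_apply, Matrix.transpose_apply, mul_comm] using this)
  simpa [Matrix.mul_apply] using this
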